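/- Let θ be an ordinal and let (f_α)_{α<θ} and (g_α)_{α<θ} be two sequences of functions ω₁ → Ordinal such that for each α < θ, f_α is a minimal upper bound in the club order of {f_β : β < α} and g_α is a minimal upper bound in the club order of {g_β : β < α} (i.e. both are sequences of canonical functions). Then for every α < θ, the set {ξ < ω₁ : f_α(ξ) = g_α(ξ)} contains a closed unbounded subset of ω₁. -/

import Mathlib

open scoped Ordinal Cardinal

/-- A set of countable ordinals is a *club* (closed unbounded subset of `ω₁`) if it consists of
ordinals `< ω₁`, is unbounded in `ω₁`, and contains the supremum of each of its nonempty
subsets that are bounded below `ω₁`. -/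
def IsClub' (C : Set Ordinal) : Prop :=
  C ⊆ Set.Iio ω₁ ∧
  (∀ ξ < ω₁, ∃ η ∈ C, ξ ≤ η) ∧
  (∀ S : Set Ordinal, S ⊆ C → S.Nonempty → (∃ η < ω₁, ∀ ξ ∈ S, ξ ≤ η) → sSup S ∈ C)

/-- A set of ordinals contains a club of `ω₁`. -/
def ContainsClub (A : Set Ordinal) : Prop :=
  ∃ C : Set Ordinal, IsClub' C ∧ C ⊆ A

/-- `f <club g` : the set of `ξ < ω₁` with `f ξ < g ξ` contains a club. -/
def ClubLT (f g : Ordinal → Ordinal) : Prop :=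
  ContainsClub {ξ | ξ < ω₁ ∧ f ξ < g ξ}

/-- `f ≤club g` : the set of `ξ < ω₁` with `f ξ ≤ g ξ` contains a club. -/
def ClubLE (f g : Ordinal → Ordinal) : Prop :=
  ContainsClub {ξ | ξ < ω₁ ∧ f ξ ≤ g ξ}

/-- A set of countable ordinals is *stationary* if it meets every club of `ω₁`. -/
def IsStationary' (S : Set Ordinal) : Prop :=
  ∀ C : Set Ordinal, IsClub' C → (S ∩ C).Nonempty


lemma club_inter {C D : Set Ordinal} (hC : IsClub' C) (hD : IsClub' D) : IsClub' (C ∩ D) := by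
  obtain ⟨hC1, hC2, hC3⟩ := hC
  obtain ⟨hD1, hD2, hD3⟩ := hD
  classical
  -- picking functions
  have pickC : ∀ ξ < ω₁, ∃ η, η ∈ C ∧ ξ ≤ η ∧ η < ω₁ := by
    intro ξ hξ; obtain ⟨η, hη, hle⟩ := hC2 ξ hξ; exact ⟨η, hη, hle, hC1 hη⟩
  have pickD : ∀ ξ < ω₁, ∃ η, η ∈ D ∧ ξ ≤ η ∧ η < ω₁ := by
    intro ξ hξ; obtain ⟨η, hη, hle⟩ := hD2 ξ hξ; exact ⟨η, hη, hle, hD1 hη⟩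
  refine ⟨fun x hx => hC1 hx.1, ?_, ?_⟩
  · intro ξ hξ
    -- build interleaved sequence
    let pC : Ordinal → Ordinal := fun x => if h : x < ω₁ then (pickC x h).choose else 0
    let pD : Ordinal → Ordinal := fun x => if h : x < ω₁ then (pickD x h).choose else 0
    have hpC : ∀ x, x < ω₁ → pC x ∈ C ∧ x ≤ pC x ∧ pC x < ω₁ := by
      intro x hx; simp only [pC, dif_pos hx]; exact (pickC x hx).choose_spec
    have hpD : ∀ x, x < ω₁ → pD x ∈ D ∧ x ≤ pD x ∧ pD x < ω₁ := by
      intro x hx; simp only [pD, dif_pos hx]; exact (pickD x hx).choose_spec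
    let c : ℕ → Ordinal := fun n => Nat.rec (pC ξ) (fun _ x => pC (pD x)) n
    have hc : ∀ n, c n ∈ C ∧ c n < ω₁ := by
      intro n
      induction n with
      | zero => exact ⟨(hpC ξ hξ).1, (hpC ξ hξ).2.2⟩
      | succ n ih =>
        have hd := hpD _ ih.2
        exact ⟨(hpC _ hd.2.2).1, (hpC _ hd.2.2).2.2⟩
    let d : ℕ → Ordinal := fun n => pD (c n)
    have hd : ∀ n, d n ∈ D ∧ c n ≤ d n ∧ d n < ω₁ := fun n => hpD _ (hc n).2
    have hdc : ∀ n, d n ≤ c (n + 1) := fun n => (hpC _ (hd n).2.2).2.1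
    have hsupc : iSup c < ω₁ := by
      have := Ordinal.iSup_lt_omega_one (f := c) (fun n => (hc n).2)
      exact this
    have hbddc : BddAbove (Set.range c) := ⟨iSup c, fun x ⟨n, hn⟩ => hn ▸ le_ciSup (Ordinal.bddAbove_range c) n⟩
    have hbddd : BddAbove (Set.range d) := Ordinal.bddAbove_range d
    have heq : sSup (Set.range c) = sSup (Set.range d) := by
      apply le_antisymm
      · apply csSup_le (Set.range_nonempty c)
        rintro x ⟨n, rfl⟩
        exact le_trans (hd n).2.1 (le_csSup hbddd ⟨n, rfl⟩)
      · apply csSup_le (Set.range_nonempty d)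
        rintro x ⟨n, rfl⟩
        exact le_trans (hdc n) (le_csSup hbddc ⟨n + 1, rfl⟩)
    have hsupd : iSup d < ω₁ := by
      show sSup (Set.range d) < ω₁
      rw [← heq]; exact hsupc
    refine ⟨sSup (Set.range c), ⟨?_, ?_⟩, ?_⟩
    · exact hC3 _ (fun x ⟨n, hn⟩ => hn ▸ (hc n).1) (Set.range_nonempty c)
        ⟨iSup c, hsupc, fun x hx => le_csSup hbddc hx⟩
    · rw [heq]
      exact hD3 _ (fun x ⟨n, hn⟩ => hn ▸ (hd n).1) (Set.range_nonempty d)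
        ⟨iSup d, hsupd, fun x hx => le_csSup hbddd hx⟩
    · exact le_trans (hpC ξ hξ).2.1 (le_csSup hbddc ⟨0, rfl⟩)
  · intro S hS hne hbd
    exact ⟨hC3 S (fun x hx => (hS hx).1) hne hbd, hD3 S (fun x hx => (hS hx).2) hne hbd⟩

lemma containsClub_mono {A B : Set Ordinal} (h : A ⊆ B) (hA : ContainsClub A) :
    ContainsClub B := by
  obtain ⟨C, hC, hCA⟩ := hA
  exact ⟨C, hC, fun x hx => h (hCA hx)⟩

lemma containsClub_inter {A B : Set Ordinal} (hA : ContainsClub A) (hB : ContainsClub B) :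
    ContainsClub (A ∩ B) := by
  obtain ⟨C, hC, hCA⟩ := hA
  obtain ⟨D, hD, hDB⟩ := hB
  exact ⟨C ∩ D, club_inter hC hD, fun x hx => ⟨hCA hx.1, hDB hx.2⟩⟩

/-- Two sequences of canonical functions agree levelwise on clubs: if for each `α < θ`,
`f α` is a minimal upper bound of `{f β : β < α}` and `g α` is a minimal upper bound of
`{g β : β < α}` in the club order, then `{ξ < ω₁ : f α ξ = g α ξ}` contains a club. -/
theorem stmt2 (θ : Ordinal) (f g : Ordinal → Ordinal → Ordinal)
    (hfU : ∀ α < θ, ∀ β < α, ClubLT (f β) (f α))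
    (hfmin : ∀ α < θ, ∀ h : Ordinal → Ordinal, (∀ β < α, ClubLT (f β) h) → ClubLE (f α) h)
    (hgU : ∀ α < θ, ∀ β < α, ClubLT (g β) (g α))
    (hgmin : ∀ α < θ, ∀ h : Ordinal → Ordinal, (∀ β < α, ClubLT (g β) h) → ClubLE (g α) h) :
    ∀ α < θ, ContainsClub {ξ | ξ < ω₁ ∧ f α ξ = g α ξ} := by
  intro α
  induction α using Ordinal.induction with
  | h α IH =>
    intro hα
    have key : ∀ β < α, ClubLT (f β) (g α) ∧ ClubLT (g β) (f α) := by
      intro β hβ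
      have hβθ : β < θ := hβ.trans hα
      have hEq := IH β hβ hβθ
      constructor
      · have h1 := hgU α hα β hβ
        refine containsClub_mono ?_ (containsClub_inter hEq h1)
        rintro ξ ⟨⟨h2, h3⟩, ⟨_, h4⟩⟩
        exact ⟨h2, h3 ▸ h4⟩
      · have h1 := hfU α hα β hβ
        refine containsClub_mono ?_ (containsClub_inter hEq h1)
        rintro ξ ⟨⟨h2, h3⟩, ⟨_, h4⟩⟩
        exact ⟨h2, h3 ▸ h4⟩
    have hle1 : ClubLE (f α) (g α) := hfmin α hα (g α) (fun β hβ => (key β hβ).1)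
    have hle2 : ClubLE (g α) (f α) := hgmin α hα (f α) (fun β hβ => (key β hβ).2)
    refine containsClub_mono ?_ (containsClub_inter hle1 hle2)
    rintro ξ ⟨⟨h1, h2⟩, ⟨_, h3⟩⟩
    exact ⟨h1, le_antisymm h2 h3⟩
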